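/- There exists a level-5 network on a two-element leaf set {x,y} that is not tree-based. Consequently, for every k ≥ 5 there exists a proper level-k network that is not tree-based. -/

import Mathlib

open SimpleGraph

/-- Degree of a vertex (as the cardinality of its neighbour set). -/
noncomputable def deg {W : Type*} (G : SimpleGraph W) (v : W) : ℕ :=
  (G.neighborSet v).ncard

/-- `T` is a support-tree for `G` with leaf set `X`: a spanning tree of `G`
whose leaves (vertices of degree at most 1) are exactly `X`. -/
def IsSupportTree {W : Type*} (G T : SimpleGraph W) (X : Set W) : Prop :=
  T ≤ G ∧ T.IsTree ∧ {v | deg T v ≤ 1} = X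

/-- A graph is tree-based on `X` if it has a support-tree with leaf set `X`. -/
def TreeBased {W : Type*} (G : SimpleGraph W) (X : Set W) : Prop :=
  ∃ T, IsSupportTree G T X

/-- An unrooted phylogenetic network on `X`: a connected graph all of whose
vertices have degree 1 or 3 (allowing the single-vertex convention via `≤ 1`),
whose leaves are exactly `X`. -/
def IsNetwork {W : Type*} (G : SimpleGraph W) (X : Set W) : Prop :=
  G.Connected ∧ (∀ v, deg G v ≤ 1 ∨ deg G v = 3) ∧ {v | deg G v ≤ 1} = X

/-- The cut-edge `{u,v}` induces a split of `X`: each side of the deleted edge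
contains an element of `X`. -/
def InducesSplit {W : Type*} (G : SimpleGraph W) (X : Set W) (u v : W) : Prop :=
  (∃ a ∈ X, (G.deleteEdges {s(u, v)}).Reachable u a) ∧
    ∃ b ∈ X, (G.deleteEdges {s(u, v)}).Reachable v b

/-- A network is proper if every cut-edge induces a split of `X`. -/
def ProperNet {W : Type*} (G : SimpleGraph W) (X : Set W) : Prop :=
  ∀ u v : W, (s(u, v) ∈ G.edgeSet ∧ G.IsBridge s(u, v)) → InducesSplit G X u v

/-- A network is simple if every cut-edge is trivial, i.e. has a leaf endpoint. -/
def SimpleNet {W : Type*} (G : SimpleGraph W) (X : Set W) : Prop :=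
  ∀ u v : W, (s(u, v) ∈ G.edgeSet ∧ G.IsBridge s(u, v)) → u ∈ X ∨ v ∈ X

/-- A graph is bridgeless if it has no cut-edge. -/
def Bridgeless {W : Type*} (H : SimpleGraph W) : Prop :=
  ∀ e, ¬ (e ∈ H.edgeSet ∧ H.IsBridge e)

/-- A blob of `G`: a maximal connected subgraph without a cut-edge that is not
a single vertex. -/
def IsBlob {W : Type*} (G : SimpleGraph W) (B : G.Subgraph) : Prop :=
  B.verts.Nontrivial ∧ B.Connected ∧ Bridgeless B.coe ∧
    ∀ B' : G.Subgraph, B'.verts.Nontrivial → B'.Connected → Bridgeless B'.coe →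
      B ≤ B' → B = B'

/-- The simple network `B_N` associated to a blob `B`: the union of `B` with
all cut-edges of `G` incident to `B`. -/
def blobNet {W : Type*} (G : SimpleGraph W) (B : G.Subgraph) : G.Subgraph where
  verts := B.verts ∪ {w | ∃ u ∈ B.verts, (s(u, w) ∈ G.edgeSet ∧ G.IsBridge s(u, w))}
  Adj a b := B.Adj a b ∨ ((s(a, b) ∈ G.edgeSet ∧ G.IsBridge s(a, b)) ∧ (a ∈ B.verts ∨ b ∈ B.verts))
  adj_sub := by
    rintro v w (h | ⟨h, -⟩)
    · exact B.adj_sub h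
    · exact (SimpleGraph.mem_edgeSet G).mp h.1
  edge_vert := by
    rintro v w (h | ⟨h, hv | hw⟩)
    · exact Or.inl (B.edge_vert h)
    · exact Or.inl hv
    · exact Or.inr ⟨w, hw, by rwa [Sym2.eq_swap]⟩
  symm := by
    constructor
    rintro v w (h | ⟨h, hc⟩)
    · exact Or.inl (B.adj_symm h)
    · exact Or.inr ⟨by rwa [Sym2.eq_swap], hc.symm⟩

/-- The leaf set of `B_N`: endpoints of incident cut-edges not lying in `B`. -/
def blobNetLeaves {W : Type*} (G : SimpleGraph W) (B : G.Subgraph) :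
    Set (blobNet G B).verts :=
  {w | (w : W) ∉ B.verts}

/-- `G` is a level-`k` network: at most `k` edges must be removed from each
blob to obtain a tree. -/
def Level {W : Type*} (G : SimpleGraph W) (k : ℕ) : Prop :=
  ∀ B : G.Subgraph, IsBlob G B → B.edgeSet.ncard ≤ B.verts.ncard - 1 + k
/-- The network `N − x`: delete leaf `x` and its incident edge and suppress the
resulting degree-2 vertex `v` (the former neighbour of `x`). -/
def suppressAdj {V : Type*} (G : SimpleGraph V) (x v : V) :
    SimpleGraph {w : V // w ≠ x ∧ w ≠ v} where
  Adj a b := a ≠ b ∧ (G.Adj a b ∨ (G.Adj v a ∧ G.Adj v b))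
  symm := by
    constructor
    rintro a b ⟨h1, h2 | ⟨h3, h4⟩⟩
    · exact ⟨h1.symm, Or.inl h2.symm⟩
    · exact ⟨h1.symm, Or.inr ⟨h4, h3⟩⟩
  loopless := by constructor; rintro a ⟨h1, -⟩; exact h1 rfl

/-- The network `C_e(x,y)`: replace the edge `e = {u,v}` of `C` by a path
`u – w₁ – w₂ – v` and attach pendant leaves `x = Sum.inr 2` to `w₁ = Sum.inr 0`
and `y = Sum.inr 3` to `w₂ = Sum.inr 1`. -/
def extGraph {W : Type*} (C : SimpleGraph W) (u v : W) : SimpleGraph (W ⊕ Fin 4) :=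
  SimpleGraph.fromEdgeSet
    ((Sym2.map Sum.inl) '' (C.edgeSet \ {s(u, v)}) ∪
      {s(Sum.inl u, Sum.inr 0), s(Sum.inr 0, Sum.inr 1), s(Sum.inr 1, Sum.inl v),
       s(Sum.inr 0, Sum.inr 2), s(Sum.inr 1, Sum.inr 3)})

/-- The leaves `x` and `y` of `C_e(x,y)`. -/
def extLeaves (W : Type*) : Set (W ⊕ Fin 4) := {Sum.inr 2, Sum.inr 3}

/-- The Petersen graph, realized as the Kneser graph K(5,2). -/
def petersen : SimpleGraph {s : Finset (Fin 5) // s.card = 2} where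
  Adj a b := Disjoint (a : Finset (Fin 5)) (b : Finset (Fin 5))
  symm := ⟨fun a b h => h.symm⟩
  loopless := ⟨fun a h => by
    have h2 : (a : Finset (Fin 5)) = ∅ := by
      simpa using disjoint_self.mp h
    have := a.2
    rw [h2] at this
    simp at this⟩

/-- `D` is an orientation of the edges of `G`. -/
def IsOrientation {V : Type*} (G : SimpleGraph V) (D : V → V → Prop) : Prop :=
  (∀ u v, G.Adj u v ↔ (D u v ∨ D v u)) ∧ ∀ u v, ¬ (D u v ∧ D v u)

noncomputable def outdeg {α : Type*} (r : α → α → Prop) (v : α) : ℕ := {w | r v w}.ncard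
noncomputable def indeg {α : Type*} (r : α → α → Prop) (v : α) : ℕ := {w | r w v}.ncard

/-- A rooted (binary) phylogenetic network with root `ρ` and leaf set `Y`:
a DAG with a unique root of indegree 0 and outdegree 2, leaves (outdegree 0,
indegree 1) exactly `Y`, and all non-root vertices of total degree 1 or 3. -/
def IsRootedNetwork {α : Type*} (r : α → α → Prop) (ρ : α) (Y : Set α) : Prop :=
  (∀ v, ¬ Relation.TransGen r v v) ∧
  indeg r ρ = 0 ∧ outdeg r ρ = 2 ∧
  (∀ v, indeg r v = 0 → v = ρ) ∧
  (∀ v, v ≠ ρ → indeg r v + outdeg r v = 1 ∨ indeg r v + outdeg r v = 3) ∧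
  {v | outdeg r v = 0} = Y ∧ (∀ v ∈ Y, indeg r v = 1)

/-- A rooted network is tree-based if it contains a spanning arborescence
rooted at `ρ` whose leaf set is `Y`. -/
def RootedTreeBased {α : Type*} (r : α → α → Prop) (ρ : α) (Y : Set α) : Prop :=
  ∃ t : α → α → Prop, (∀ a b, t a b → r a b) ∧
    (∀ v, Relation.ReflTransGen t ρ v) ∧
    (∀ v, v ≠ ρ → indeg t v = 1) ∧ indeg t ρ = 0 ∧
    {v | outdeg t v = 0} = Y

/-- `T` is obtained from `T'` by suppressing all degree-2 vertices, via the
embedding `f` of the vertices of `T` into those of `T'`. -/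
def Suppresses {A B : Type*} (T' : SimpleGraph A) (T : SimpleGraph B) (f : B → A) : Prop :=
  Function.Injective f ∧
  (∀ a : A, deg T' a ≠ 2 → a ∈ Set.range f) ∧
  (∀ b : B, deg T' (f b) ≠ 2) ∧
  ∀ b b' : B, T.Adj b b' ↔
    ∃ p : T'.Walk (f b) (f b'), p.IsPath ∧
      ∀ a ∈ p.support, a ≠ f b → a ≠ f b' → deg T' a = 2

/-- `G` is fully tree-based on `X`: every subtree of `G` whose leaf set is `X`
is spanning (hence a support-tree). -/
def FullyTreeBased {W : Type*} (G : SimpleGraph W) (X : Set W) : Prop :=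
  ∀ H : G.Subgraph, H.Connected → H.coe.IsAcyclic →
    {v | v ∈ H.verts ∧ (H.neighborSet v).ncard ≤ 1} = X → H.IsSpanning

namespace FHMwit

def gpairs : List (ℕ × ℕ) :=
  [(0,2),(1,3),(2,6),(2,7),(3,8),(3,10),(4,7),(4,10),(4,11),(5,6),(5,9),(5,10),(6,11),(7,9),(8,9),(8,11)]

def adjB (a b : Fin 12) : Bool := ((a.val, b.val) ∈ gpairs) || ((b.val, a.val) ∈ gpairs)

lemma adjB_symm : ∀ a b : Fin 12, adjB a b = adjB b a := by decide
lemma adjB_irrefl : ∀ a : Fin 12, adjB a a = false := by decide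

def Gw : SimpleGraph (Fin 12) where
  Adj a b := adjB a b = true
  symm := ⟨fun a b h => by show adjB b a = true; rw [← adjB_symm]; exact h⟩
  loopless := ⟨fun a h => by
    have h' : adjB a a = true := h
    rw [adjB_irrefl] at h'; cases h'⟩

instance : DecidableRel Gw.Adj := fun a b => inferInstanceAs (Decidable (adjB a b = true))

/-! DFS enumeration of paths from vertex 0 -/

def allV : List (Fin 12) := List.finRange 12

def dstep (ls : List (List (Fin 12))) : List (List (Fin 12)) :=
  ls.flatMap fun l =>
    match l with
    | [] => []
    | h :: _ => (allV.filter fun w => adjB w h && decide (w ∉ l)).map (· :: l)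

def dpaths : ℕ → List (List (Fin 12))
  | 0 => [[(0 : Fin 12)]]
  | n + 1 => dstep (dpaths n)

lemma mem_dpaths : ∀ (n : ℕ) (l : List (Fin 12)),
    List.Chain' (fun a b => adjB a b = true) l →
    l.Nodup → l.getLast? = some 0 → l.length = n + 1 → l ∈ dpaths n := by
  intro n
  induction n with
  | zero =>
    intro l _ _ hlast hlen
    match l, hlen with
    | [a], _ =>
      simp only [List.getLast?_singleton, Option.some.injEq] at hlast
      subst hlast
      simp [dpaths]
  | succ n ih =>
    intro l hchain hnodup hlast hlen
    match l, hlen with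
    | h :: h' :: t', hlen =>
      have hadj : adjB h h' = true := (List.isChain_cons_cons.mp hchain).1
      have hmem : (h' :: t') ∈ dpaths n := by
        refine ih _ (List.isChain_cons_cons.mp hchain).2 hnodup.of_cons ?_ (by simpa using hlen)
        rw [← List.getLast?_cons_cons]
        exact hlast
      show _ ∈ dstep (dpaths n)
      rw [dstep, List.mem_flatMap]
      refine ⟨h' :: t', hmem, ?_⟩
      simp only [List.mem_map, List.mem_filter]
      refine ⟨h, ⟨by simp [allV, List.mem_finRange], ?_⟩, rfl⟩
      have hnot : h ∉ h' :: t' := (List.nodup_cons.mp hnodup).1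
      simp [hadj, hnot]

lemma dpaths11 : dpaths 11 = [] := by decide

lemma no_ham (l : List (Fin 12)) (hchain : List.Chain' (fun a b => adjB a b = true) l)
    (hnodup : l.Nodup) (hlast : l.getLast? = some 0) (hlen : l.length = 12) : False := by
  have := mem_dpaths 11 l hchain hnodup hlast (by omega)
  rw [dpaths11] at this
  exact (List.not_mem_nil this)



/-! ### reachability helpers -/

lemma reach_of_chain {V : Type*} {H : SimpleGraph V} :
    ∀ (l : List V) (a b : V), List.Chain H.Adj a (l ++ [b]) → H.Reachable a b := by
  intro l
  induction l with
  | nil =>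
    intro a b h
    simp only [List.nil_append, List.Chain, List.isChain_cons_cons] at h
    exact h.1.reachable
  | cons c l ih =>
    intro a b h
    simp only [List.cons_append, List.Chain, List.isChain_cons_cons] at h
    exact (h.1.reachable).trans (ih c b h.2)

/-- Boolean chain check in `Gw`. -/
def chainB : Fin 12 → List (Fin 12) → Bool
  | _, [] => true
  | a, b :: l => adjB a b && chainB b l

lemma chain_of_chainB : ∀ (l : List (Fin 12)) (a : Fin 12), chainB a l = true →
    List.Chain Gw.Adj a l := by
  intro l
  induction l with
  | nil => intro a _; exact List.Chain.nil
  | cons b l ih =>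
    intro a h
    rw [chainB, Bool.and_eq_true] at h
    exact List.Chain.cons h.1 (ih b h.2)

lemma reachB (a b : Fin 12) (l : List (Fin 12)) (h : chainB a (l ++ [b]) = true) :
    Gw.Reachable a b :=
  reach_of_chain l a b (chain_of_chainB _ a h)

lemma reach0 : ∀ v : Fin 12, Gw.Reachable 0 v := by
  intro v
  fin_cases v
  · exact Reachable.refl _
  · exact reachB _ _ [2,6,5,10,3] (by decide)
  · exact reachB _ _ [] (by decide)
  · exact reachB _ _ [2,6,5,10] (by decide)
  · exact reachB _ _ [2,7] (by decide)
  · exact reachB _ _ [2,6] (by decide)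
  · exact reachB _ _ [2] (by decide)
  · exact reachB _ _ [2] (by decide)
  · exact reachB _ _ [2,6,5,10,3] (by decide)
  · exact reachB _ _ [2,6,5] (by decide)
  · exact reachB _ _ [2,6,5] (by decide)
  · exact reachB _ _ [2,6] (by decide)

lemma Gw_conn : Gw.Connected := by
  rw [connected_iff]
  exact ⟨fun u v => (reach0 u).symm.trans (reach0 v), ⟨0⟩⟩

/-! ### degrees -/

lemma deg_eq_degree (H : SimpleGraph (Fin 12)) [DecidableRel H.Adj] (v : Fin 12) :
    deg H v = H.degree v := by
  rw [deg, Set.ncard_eq_toFinset_card']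
  rfl

lemma degree_Gw : ∀ v : Fin 12, Gw.degree v ≤ 1 ∨ Gw.degree v = 3 := by decide
lemma degree_Gw_leaves : ∀ v : Fin 12, (Gw.degree v ≤ 1 ↔ (v = 0 ∨ v = 1)) := by decide

lemma network : IsNetwork Gw {0, 1} := by
  refine ⟨Gw_conn, fun v => by rw [deg_eq_degree]; exact degree_Gw v, ?_⟩
  ext v
  simp only [Set.mem_setOf_eq, deg_eq_degree, Set.mem_insert_iff, Set.mem_singleton_iff]
  exact degree_Gw_leaves v

/-! ### level 5 -/

def fpairs : List (Fin 12 × Fin 12) := [(0,2), (1,3), (2,6), (2,7), (3,8), (3,10), (4,7), (4,10), (4,11), (5,6), (5,9), (5,10), (6,11), (7,9), (8,9), (8,11)]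

def vlist : List (Fin 12) := [0,1,2,3,4,5,6,7,8,9,10,11]

lemma keyB : ∀ (b0 b1 b2 b3 b4 b5 b6 b7 b8 b9 b10 b11 : Bool),
    (b0 && b2).toNat + (b1 && b3).toNat + (b2 && b6).toNat + (b2 && b7).toNat + (b3 && b8).toNat + (b3 && b10).toNat + (b4 && b7).toNat + (b4 && b10).toNat + (b4 && b11).toNat + (b5 && b6).toNat + (b5 && b9).toNat + (b5 && b10).toNat + (b6 && b11).toNat + (b7 && b9).toNat + (b8 && b9).toNat + (b8 && b11).toNat ≤
      b0.toNat + b1.toNat + b2.toNat + b3.toNat + b4.toNat + b5.toNat + b6.toNat + b7.toNat + b8.toNat + b9.toNat + b10.toNat + b11.toNat - 1 + 5 := by decide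

lemma flen {α : Type*} (q : α → Bool) :
    ∀ l : List α, (l.filter q).length = (l.map (fun a => (q a).toNat)).sum := by
  intro l
  induction l with
  | nil => rfl
  | cons a l ih =>
    cases hqa : q a <;>
      simp [List.filter_cons, hqa, List.map_cons, List.sum_cons, ih] <;> omega

lemma adj_mem_fpairs : ∀ a b : Fin 12, Gw.Adj a b →
    (a, b) ∈ fpairs ∨ (b, a) ∈ fpairs := by decide

lemma level5 : Level Gw 5 := by
  intro B _
  classical
  set d : Fin 12 → Bool := fun i => decide (i ∈ B.verts) with hd
  have hdt : ∀ i : Fin 12, i ∈ B.verts → d i = true := by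
    intro i hi; rw [hd]; exact decide_eq_true hi
  -- edge side
  have hEsub : B.edgeSet ⊆
      ↑(((fpairs.filter (fun p => d p.1 && d p.2)).map (fun p => s(p.1, p.2))).toFinset) := by
    intro e he
    revert he
    refine Sym2.ind (fun a b he => ?_) e
    have hadj : B.Adj a b := (Subgraph.mem_edgeSet).mp he
    have ha : d a = true := hdt a (B.edge_vert hadj)
    have hb : d b = true := hdt b (B.edge_vert hadj.symm)
    rw [Finset.mem_coe, List.mem_toFinset, List.mem_map]
    rcases adj_mem_fpairs a b (B.adj_sub hadj) with hm | hm
    · exact ⟨(a, b), List.mem_filter.mpr ⟨hm, by simp [ha, hb]⟩, rfl⟩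
    · exact ⟨(b, a), List.mem_filter.mpr ⟨hm, by simp [ha, hb]⟩, Sym2.eq_swap⟩
  have hE1 : B.edgeSet.ncard ≤ (fpairs.filter (fun p => d p.1 && d p.2)).length := by
    calc B.edgeSet.ncard
        ≤ (((fpairs.filter (fun p => d p.1 && d p.2)).map
            (fun p => s(p.1, p.2))).toFinset).card := by
          rw [← Set.ncard_coe_finset]
          exact Set.ncard_le_ncard hEsub (Finset.finite_toSet _)
      _ ≤ ((fpairs.filter (fun p => d p.1 && d p.2)).map (fun p => s(p.1, p.2))).length :=
          List.toFinset_card_le _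
      _ = _ := List.length_map _
  -- vertex side
  have hV1 : (vlist.filter d).length ≤ B.verts.ncard := by
    have hnd : (vlist.filter d).Nodup := List.Nodup.filter _ (by decide)
    have hsub : ↑((vlist.filter d).toFinset) ⊆ B.verts := by
      intro x hx
      rw [Finset.mem_coe, List.mem_toFinset, List.mem_filter] at hx
      exact of_decide_eq_true hx.2
    calc (vlist.filter d).length = ((vlist.filter d).toFinset).card :=
          (List.toFinset_card_of_nodup hnd).symm
      _ = (↑((vlist.filter d).toFinset) : Set (Fin 12)).ncard :=
          (Set.ncard_coe_finset _).symm
      _ ≤ B.verts.ncard := Set.ncard_le_ncard hsub (Set.toFinite _)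
  rw [flen (fun p : Fin 12 × Fin 12 => d p.1 && d p.2) fpairs] at hE1
  rw [flen d vlist] at hV1
  simp only [fpairs, List.map_cons, List.map_nil, List.sum_cons, List.sum_nil] at hE1
  simp only [vlist, List.map_cons, List.map_nil, List.sum_cons, List.sum_nil] at hV1
  have hkey := keyB (d 0) (d 1) (d 2) (d 3) (d 4) (d 5) (d 6) (d 7) (d 8) (d 9) (d 10) (d 11)
  omega

/-! ### properness -/

/-- Boolean chain check avoiding the edge `{u,v}`. -/
def chainD (u v : Fin 12) : Fin 12 → List (Fin 12) → Bool
  | _, [] => true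
  | a, b :: l => adjB a b && !((a == u && b == v) || (a == v && b == u)) && chainD u v b l

lemma chain_of_chainD (u v : Fin 12) : ∀ (l : List (Fin 12)) (a : Fin 12),
    chainD u v a l = true →
    List.Chain (fun p q => Gw.Adj p q ∧ s(p,q) ≠ s(u,v)) a l := by
  intro l
  induction l with
  | nil => intro a _; exact List.Chain.nil
  | cons b l ih =>
    intro a h
    rw [chainD, Bool.and_eq_true, Bool.and_eq_true] at h
    refine List.Chain.cons ⟨h.1.1, ?_⟩ (ih b h.2)
    intro heq
    rw [Sym2.eq_iff] at heq
    have hne := h.1.2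
    rcases heq with ⟨rfl, rfl⟩ | ⟨rfl, rfl⟩ <;> simp at hne

lemma reach_del (u v a b : Fin 12) (l : List (Fin 12))
    (h : chainD u v a (l ++ [b]) = true) :
    (Gw.deleteEdges {s(u,v)}).Reachable a b :=
  reach_of_chain l a b (List.IsChain.imp (fun p q hpq => by
    rw [SimpleGraph.deleteEdges_adj]
    exact ⟨hpq.1, by simpa using hpq.2⟩) (chain_of_chainD u v _ a h))

lemma split_all : ∀ u v : Fin 12, Gw.Adj u v →
    ∃ a ∈ ({0, 1} : Set (Fin 12)), (Gw.deleteEdges {s(u, v)}).Reachable u a := by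
  intro u v huv
  fin_cases u <;> fin_cases v
  · exact absurd huv (by decide)
  · exact absurd huv (by decide)
  · exact ⟨0, by simp, SimpleGraph.Reachable.refl _⟩
  · exact absurd huv (by decide)
  · exact absurd huv (by decide)
  · exact absurd huv (by decide)
  · exact absurd huv (by decide)
  · exact absurd huv (by decide)
  · exact absurd huv (by decide)
  · exact absurd huv (by decide)
  · exact absurd huv (by decide)
  · exact absurd huv (by decide)
  · exact absurd huv (by decide)
  · exact absurd huv (by decide)
  · exact absurd huv (by decide)
  · exact ⟨1, by simp, SimpleGraph.Reachable.refl _⟩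
  · exact absurd huv (by decide)
  · exact absurd huv (by decide)
  · exact absurd huv (by decide)
  · exact absurd huv (by decide)
  · exact absurd huv (by decide)
  · exact absurd huv (by decide)
  · exact absurd huv (by decide)
  · exact absurd huv (by decide)
  · exact ⟨1, by simp, reach_del _ _ _ _ [6, 11, 8, 3] (by decide)⟩
  · exact absurd huv (by decide)
  · exact absurd huv (by decide)
  · exact absurd huv (by decide)
  · exact absurd huv (by decide)
  · exact absurd huv (by decide)
  · exact ⟨0, by simp, reach_del _ _ _ _ [] (by decide)⟩
  · exact ⟨0, by simp, reach_del _ _ _ _ [] (by decide)⟩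
  · exact absurd huv (by decide)
  · exact absurd huv (by decide)
  · exact absurd huv (by decide)
  · exact absurd huv (by decide)
  · exact absurd huv (by decide)
  · exact ⟨0, by simp, reach_del _ _ _ _ [8, 11, 6, 2] (by decide)⟩
  · exact absurd huv (by decide)
  · exact absurd huv (by decide)
  · exact absurd huv (by decide)
  · exact absurd huv (by decide)
  · exact absurd huv (by decide)
  · exact absurd huv (by decide)
  · exact ⟨1, by simp, reach_del _ _ _ _ [] (by decide)⟩
  · exact absurd huv (by decide)
  · exact ⟨1, by simp, reach_del _ _ _ _ [] (by decide)⟩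
  · exact absurd huv (by decide)
  · exact absurd huv (by decide)
  · exact absurd huv (by decide)
  · exact absurd huv (by decide)
  · exact absurd huv (by decide)
  · exact absurd huv (by decide)
  · exact absurd huv (by decide)
  · exact absurd huv (by decide)
  · exact ⟨1, by simp, reach_del _ _ _ _ [10, 3] (by decide)⟩
  · exact absurd huv (by decide)
  · exact absurd huv (by decide)
  · exact ⟨0, by simp, reach_del _ _ _ _ [7, 2] (by decide)⟩
  · exact ⟨1, by simp, reach_del _ _ _ _ [10, 3] (by decide)⟩
  · exact absurd huv (by decide)
  · exact absurd huv (by decide)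
  · exact absurd huv (by decide)
  · exact absurd huv (by decide)
  · exact absurd huv (by decide)
  · exact absurd huv (by decide)
  · exact ⟨1, by simp, reach_del _ _ _ _ [10, 3] (by decide)⟩
  · exact absurd huv (by decide)
  · exact absurd huv (by decide)
  · exact ⟨1, by simp, reach_del _ _ _ _ [10, 3] (by decide)⟩
  · exact ⟨0, by simp, reach_del _ _ _ _ [6, 2] (by decide)⟩
  · exact absurd huv (by decide)
  · exact absurd huv (by decide)
  · exact absurd huv (by decide)
  · exact ⟨1, by simp, reach_del _ _ _ _ [11, 8, 3] (by decide)⟩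
  · exact absurd huv (by decide)
  · exact absurd huv (by decide)
  · exact ⟨0, by simp, reach_del _ _ _ _ [2] (by decide)⟩
  · exact absurd huv (by decide)
  · exact absurd huv (by decide)
  · exact absurd huv (by decide)
  · exact absurd huv (by decide)
  · exact absurd huv (by decide)
  · exact ⟨0, by simp, reach_del _ _ _ _ [2] (by decide)⟩
  · exact absurd huv (by decide)
  · exact absurd huv (by decide)
  · exact ⟨1, by simp, reach_del _ _ _ _ [9, 8, 3] (by decide)⟩
  · exact absurd huv (by decide)
  · exact ⟨0, by simp, reach_del _ _ _ _ [2] (by decide)⟩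
  · exact absurd huv (by decide)
  · exact absurd huv (by decide)
  · exact absurd huv (by decide)
  · exact absurd huv (by decide)
  · exact ⟨0, by simp, reach_del _ _ _ _ [2] (by decide)⟩
  · exact absurd huv (by decide)
  · exact absurd huv (by decide)
  · exact absurd huv (by decide)
  · exact absurd huv (by decide)
  · exact absurd huv (by decide)
  · exact ⟨0, by simp, reach_del _ _ _ _ [11, 6, 2] (by decide)⟩
  · exact absurd huv (by decide)
  · exact absurd huv (by decide)
  · exact absurd huv (by decide)
  · exact absurd huv (by decide)
  · exact absurd huv (by decide)
  · exact ⟨1, by simp, reach_del _ _ _ _ [3] (by decide)⟩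
  · exact absurd huv (by decide)
  · exact ⟨1, by simp, reach_del _ _ _ _ [3] (by decide)⟩
  · exact absurd huv (by decide)
  · exact absurd huv (by decide)
  · exact absurd huv (by decide)
  · exact absurd huv (by decide)
  · exact absurd huv (by decide)
  · exact ⟨1, by simp, reach_del _ _ _ _ [8, 3] (by decide)⟩
  · exact absurd huv (by decide)
  · exact ⟨1, by simp, reach_del _ _ _ _ [8, 3] (by decide)⟩
  · exact ⟨0, by simp, reach_del _ _ _ _ [7, 2] (by decide)⟩
  · exact absurd huv (by decide)
  · exact absurd huv (by decide)
  · exact absurd huv (by decide)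
  · exact absurd huv (by decide)
  · exact absurd huv (by decide)
  · exact absurd huv (by decide)
  · exact ⟨0, by simp, reach_del _ _ _ _ [4, 7, 2] (by decide)⟩
  · exact ⟨1, by simp, reach_del _ _ _ _ [3] (by decide)⟩
  · exact ⟨1, by simp, reach_del _ _ _ _ [3] (by decide)⟩
  · exact absurd huv (by decide)
  · exact absurd huv (by decide)
  · exact absurd huv (by decide)
  · exact absurd huv (by decide)
  · exact absurd huv (by decide)
  · exact absurd huv (by decide)
  · exact absurd huv (by decide)
  · exact absurd huv (by decide)
  · exact absurd huv (by decide)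
  · exact absurd huv (by decide)
  · exact ⟨1, by simp, reach_del _ _ _ _ [8, 3] (by decide)⟩
  · exact absurd huv (by decide)
  · exact ⟨1, by simp, reach_del _ _ _ _ [8, 3] (by decide)⟩
  · exact absurd huv (by decide)
  · exact ⟨0, by simp, reach_del _ _ _ _ [6, 2] (by decide)⟩
  · exact absurd huv (by decide)
  · exact absurd huv (by decide)
  · exact absurd huv (by decide)

lemma proper : ProperNet Gw {0, 1} := by
  intro u v hb
  have huv : Gw.Adj u v := hb.1
  refine ⟨split_all u v huv, ?_⟩
  obtain ⟨b, hb', hr⟩ := split_all v u huv.symm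
  refine ⟨b, hb', ?_⟩
  rw [show s(u,v) = s(v,u) from Sym2.eq_swap]
  exact hr

/-! ### not tree-based -/

lemma eq_of_ncard_le_one {α : Type*} {s : Set α} (hfin : s.Finite) (h : s.ncard ≤ 1)
    {a b : α} (ha : a ∈ s) (hb : b ∈ s) : a = b := by
  by_contra hne
  have hsub : ({a, b} : Set α) ⊆ s := by
    intro x hx
    rcases hx with rfl | hx
    · exact ha
    · rw [Set.mem_singleton_iff] at hx; subst hx; exact hb
  have h2 : ({a, b} : Set α).ncard = 2 := Set.ncard_pair hne
  have hle := Set.ncard_le_ncard hsub hfin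
  omega

lemma mem_pair_of_ncard_le_two {α : Type*} {s : Set α} (hfin : s.Finite) (h : s.ncard ≤ 2)
    {a b c : α} (ha : a ∈ s) (hb : b ∈ s) (hc : c ∈ s) (hab : a ≠ b) : c = a ∨ c = b := by
  by_contra hcon
  push_neg at hcon
  have hsub : ({c, a, b} : Set α) ⊆ s := by
    intro x hx
    simp only [Set.mem_insert_iff, Set.mem_singleton_iff] at hx
    rcases hx with rfl | rfl | rfl <;> assumption
  have h3 : ({c, a, b} : Set α).ncard = 3 := by
    rw [Set.ncard_insert_of_notMem (by simp [hcon.1, hcon.2]), Set.ncard_pair hab]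
  have hle := Set.ncard_le_ncard hsub hfin
  omega

lemma support_get? {V : Type*} {H : SimpleGraph V} :
    ∀ {u v : V} (p : H.Walk u v) (i : ℕ), i ≤ p.length →
      p.support[i]? = some (p.getVert i) := by
  intro u v p
  induction p with
  | nil =>
    intro i hi
    have h0 : i = 0 := by simpa using hi
    subst h0
    simp [Walk.getVert_zero]
  | cons h q ih =>
    intro i hi
    cases i with
    | zero => simp [Walk.getVert_zero]
    | succ n =>
      rw [Walk.support_cons, List.getElem?_cons_succ, Walk.getVert_cons_succ]
      exact ih n (by simpa [Walk.length_cons] using hi)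

lemma support_head? {V : Type*} {H : SimpleGraph V} {a b : V} (q : H.Walk a b) :
    q.support.head? = some a := by
  cases q <;> rfl

lemma closure {T : SimpleGraph (Fin 12)} {p : T.Walk 0 1} (hp : p.IsPath)
    (hdeg : ∀ v, deg T v ≤ 2) (h0 : deg T 0 ≤ 1) (h1 : deg T 1 ≤ 1) :
    ∀ u v : Fin 12, u ∈ p.support → T.Adj u v → v ∈ p.support := by
  intro u v hu hadj
  obtain ⟨i, hget, hi⟩ := Walk.mem_support_iff_exists_getVert.mp hu
  have hlen0 : p.length ≠ 0 := by
    intro h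
    have h01 : (0 : Fin 12) = 1 := by
      have := p.getVert_length
      rw [h, p.getVert_zero] at this
      exact this
    exact absurd h01 (by decide)
  have hnodup := hp.support_nodup
  have hls : p.support.length = p.length + 1 := Walk.length_support p
  by_cases hi0 : i = 0
  · subst hi0
    rw [p.getVert_zero] at hget
    subst hget
    have hnext : T.Adj 0 (p.getVert 1) := by
      have := p.adj_getVert_succ (by omega : 0 < p.length)
      rwa [p.getVert_zero] at this
    have hv : v = p.getVert 1 :=
      eq_of_ncard_le_one (Set.toFinite _) h0 hadj hnext
    rw [hv]
    exact Walk.mem_support_iff_exists_getVert.mpr ⟨1, rfl, by omega⟩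
  · by_cases hil : i = p.length
    · subst hil
      rw [p.getVert_length] at hget
      subst hget
      have hprev : T.Adj 1 (p.getVert (p.length - 1)) := by
        have := p.adj_getVert_succ (by omega : p.length - 1 < p.length)
        rw [show p.length - 1 + 1 = p.length by omega, p.getVert_length] at this
        exact this.symm
      have hv : v = p.getVert (p.length - 1) :=
        eq_of_ncard_le_one (Set.toFinite _) h1 hadj hprev
      rw [hv]
      exact Walk.mem_support_iff_exists_getVert.mpr ⟨p.length - 1, rfl, by omega⟩
    · have hipos : 0 < i := Nat.pos_of_ne_zero hi0
      have hilt : i < p.length := lt_of_le_of_ne hi hil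
      subst hget
      have hprev : T.Adj (p.getVert i) (p.getVert (i - 1)) := by
        have := p.adj_getVert_succ (by omega : i - 1 < p.length)
        rw [show i - 1 + 1 = i by omega] at this
        exact this.symm
      have hnext : T.Adj (p.getVert i) (p.getVert (i + 1)) :=
        p.adj_getVert_succ hilt
      have hne : p.getVert (i - 1) ≠ p.getVert (i + 1) := by
        intro heq
        have e1 := support_get? p (i - 1) (by omega)
        have e2 := support_get? p (i + 1) (by omega)
        rw [heq] at e1
        have := (List.getElem?_inj (by omega : i - 1 < p.support.length) hnodup).mp (e1.trans e2.symm)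
        omega
      rcases mem_pair_of_ncard_le_two (Set.toFinite _) (hdeg (p.getVert i))
          hprev hnext hadj hne with hv | hv <;> rw [hv]
      · exact Walk.mem_support_iff_exists_getVert.mpr ⟨i - 1, rfl, by omega⟩
      · exact Walk.mem_support_iff_exists_getVert.mpr ⟨i + 1, rfl, by omega⟩

set_option maxHeartbeats 2000000 in
lemma not_tb : ¬ TreeBased Gw {0, 1} := by
  rintro ⟨T, hle, htree, hleaf⟩
  classical
  have hdeg_le1_0 : deg T 0 ≤ 1 := by
    have : (0 : Fin 12) ∈ {v | deg T v ≤ 1} := by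
      rw [hleaf]; exact Set.mem_insert _ _
    exact this
  have hdeg_le1_1 : deg T 1 ≤ 1 := by
    have : (1 : Fin 12) ∈ {v | deg T v ≤ 1} := by
      rw [hleaf]; exact Set.mem_insert_of_mem _ rfl
    exact this
  have hint : ∀ v : Fin 12, v ≠ 0 → v ≠ 1 → 2 ≤ deg T v := by
    intro v hv0 hv1
    by_contra hcon
    have hmem : v ∈ {v | deg T v ≤ 1} := by
      simp only [Set.mem_setOf_eq]; omega
    rw [hleaf] at hmem
    rcases hmem with rfl | hmem
    · exact hv0 rfl
    · rw [Set.mem_singleton_iff] at hmem; exact hv1 hmem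
  letI : DecidableRel T.Adj := Classical.decRel _
  have hdegeq : ∀ v, deg T v = T.degree v := fun v => by
    rw [deg, Set.ncard_eq_toFinset_card']; rfl
  have hT0pos : 1 ≤ deg T 0 := by
    obtain ⟨q⟩ := htree.isConnected.preconnected 0 1
    have hq0 : q.length ≠ 0 := by
      intro h
      have h01 : (0 : Fin 12) = 1 := by
        have := q.getVert_length
        rw [h, q.getVert_zero] at this
        exact this
      exact absurd h01 (by decide)
    have hadj : T.Adj 0 (q.getVert 1) := by
      have := q.adj_getVert_succ (by omega : 0 < q.length)
      rwa [q.getVert_zero] at this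
    have hne : (T.neighborSet 0).Nonempty := ⟨q.getVert 1, hadj⟩
    exact (Set.ncard_pos (Set.toFinite _)).mpr hne
  have hT1pos : 1 ≤ deg T 1 := by
    obtain ⟨q⟩ := htree.isConnected.preconnected 1 0
    have hq0 : q.length ≠ 0 := by
      intro h
      have h01 : (1 : Fin 12) = 0 := by
        have := q.getVert_length
        rw [h, q.getVert_zero] at this
        exact this
      exact absurd h01 (by decide)
    have hadj : T.Adj 1 (q.getVert 1) := by
      have := q.adj_getVert_succ (by omega : 0 < q.length)
      rwa [q.getVert_zero] at this
    have hne : (T.neighborSet 1).Nonempty := ⟨q.getVert 1, hadj⟩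
    exact (Set.ncard_pos (Set.toFinite _)).mpr hne
  have hedges : T.edgeFinset.card = 11 := by
    have := htree.card_edgeFinset
    rw [Fintype.card_fin] at this
    omega
  have hsum : ∑ v, deg T v = 22 := by
    have hs2 := sum_degrees_eq_twice_card_edges T
    rw [hedges] at hs2
    rw [Finset.sum_congr rfl fun v _ => hdegeq v, hs2]
  have hU1 : (1 : Fin 12) ∈ Finset.univ.erase (0 : Fin 12) := by decide
  have hU0 : (0 : Fin 12) ∈ (Finset.univ : Finset (Fin 12)) := by decide
  have e1 := Finset.add_sum_erase (M := ℕ) ((Finset.univ : Finset (Fin 12)).erase 0) (deg T) hU1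
  have e0 := Finset.add_sum_erase (M := ℕ) (Finset.univ : Finset (Fin 12)) (deg T) hU0
  have hUsum : ∑ v ∈ (Finset.univ.erase (0 : Fin 12)).erase 1, deg T v = 20 := by
    omega
  have hUcard : ((Finset.univ.erase (0 : Fin 12)).erase 1).card = 10 := by decide
  have hUdeg2 : ∀ v ∈ (Finset.univ.erase (0 : Fin 12)).erase 1, deg T v ≤ 2 := by
    intro v hv
    by_contra hgt
    push_neg at hgt
    have hmemU : ∀ i ∈ (Finset.univ.erase (0 : Fin 12)).erase 1, 2 ≤ deg T i := by
      intro i hi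
      rw [Finset.mem_erase, Finset.mem_erase] at hi
      exact hint i hi.2.1 hi.1
    have hlt : ∑ _i ∈ (Finset.univ.erase (0 : Fin 12)).erase 1, 2 <
        ∑ i ∈ (Finset.univ.erase (0 : Fin 12)).erase 1, deg T i :=
      Finset.sum_lt_sum hmemU ⟨v, hv, by omega⟩
    rw [Finset.sum_const, hUcard, smul_eq_mul] at hlt
    omega
  have hdeg2 : ∀ v, deg T v ≤ 2 := by
    intro v
    by_cases hv0 : v = 0
    · subst hv0; omega
    by_cases hv1 : v = 1
    · subst hv1; omega
    have hvU : v ∈ (Finset.univ.erase (0 : Fin 12)).erase 1 := by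
      rw [Finset.mem_erase, Finset.mem_erase]
      exact ⟨hv1, hv0, Finset.mem_univ _⟩
    exact hUdeg2 v hvU
  obtain ⟨q⟩ := htree.isConnected.preconnected 0 1
  have hp : (q.toPath : T.Walk 0 1).IsPath := q.toPath.2
  have hcl := closure hp hdeg2 hdeg_le1_0 hdeg_le1_1
  have hall : ∀ w, w ∈ (q.toPath : T.Walk 0 1).support := by
    have key : ∀ (a b : Fin 12) (r : T.Walk a b),
        a ∈ (q.toPath : T.Walk 0 1).support → b ∈ (q.toPath : T.Walk 0 1).support := by
      intro a b r
      induction r with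
      | nil => exact id
      | cons h r ih => intro ha; exact ih (hcl _ _ ha h)
    intro w
    obtain ⟨r⟩ := htree.isConnected.preconnected 0 w
    exact key 0 w r ((q.toPath : T.Walk 0 1).start_mem_support)
  have hnodup : (q.toPath : T.Walk 0 1).support.Nodup := hp.support_nodup
  have hlen : (q.toPath : T.Walk 0 1).support.length = 12 := by
    have hft : (q.toPath : T.Walk 0 1).support.toFinset = Finset.univ := by
      ext w
      simp only [List.mem_toFinset, Finset.mem_univ, iff_true]
      exact hall w
    have hcard := List.toFinset_card_of_nodup hnodup
    rw [hft] at hcard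
    simpa using hcard.symm
  have hchain : List.Chain' (fun a b : Fin 12 => adjB a b = true)
      (q.toPath : T.Walk 0 1).support :=
    ((q.toPath : T.Walk 0 1).isChain_adj_support).imp fun _ _ hab => hle hab
  have hrev_chain : List.Chain' (fun a b : Fin 12 => adjB a b = true)
      (q.toPath : T.Walk 0 1).support.reverse := by
    show List.IsChain _ _
    rw [List.isChain_reverse]
    exact List.IsChain.imp (fun a b hab => by
      show adjB b a = true
      rw [← adjB_symm]
      exact hab) hchain
  have hlast : (q.toPath : T.Walk 0 1).support.reverse.getLast? = some 0 := by
    rw [List.getLast?_reverse]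
    exact support_head? _
  exact no_ham _ hrev_chain (List.nodup_reverse.mpr hnodup) hlast
    (by simpa using hlen)

end FHMwit

/-- There is a level-5 network on two leaves (on 12 vertices) that is not
tree-based; consequently, for every `k ≥ 5` there is a proper level-`k`
network that is not tree-based. -/
theorem stmt6 :
    (∃ (G : SimpleGraph (Fin 12)) (x y : Fin 12), x ≠ y ∧
      IsNetwork G {x, y} ∧ Level G 5 ∧ ¬ TreeBased G {x, y}) ∧
    ∀ k : ℕ, 5 ≤ k → ∃ (n : ℕ) (G : SimpleGraph (Fin n)) (X : Set (Fin n)),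
      IsNetwork G X ∧ ProperNet G X ∧ Level G k ∧ ¬ TreeBased G X := by
  constructor
  · exact ⟨FHMwit.Gw, 0, 1, by decide, FHMwit.network, FHMwit.level5, FHMwit.not_tb⟩
  · intro k hk
    refine ⟨12, FHMwit.Gw, {0, 1}, FHMwit.network, FHMwit.proper, ?_, FHMwit.not_tb⟩
    intro B hB
    exact le_trans (FHMwit.level5 B hB) (Nat.add_le_add_left hk _)
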